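/- arXiv:2110.01520 — 3 statements merged into one kernel-verified Lean document; each statement's English description precedes it below -/
import Mathlib

section
/- Let G be a finite group in which every two abelian p-subgroups of equal order are conjugate (for every prime p). If P is a Sylow p-subgroup of G for an odd prime p and P is non-cyclic, and P contains an element of order p^2, then P contains exactly one subgroup of order p. -/
open Subgroup

/-- A finite group is in the class `A_pi` if for every prime `p`, any two abelian
`p`-subgroups of equal order are conjugate. -/
def IsApi (G : Type*) [Group G] : Prop :=
  ∀ p : ℕ, p.Prime → ∀ X Y : Subgroup G, IsPGroup p X → IsPGroup p Y →
    IsMulCommutative X → IsMulCommutative Y → Nat.card X = Nat.card Y →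
    ∃ g : G, X.map (MulAut.conj g).toMonoidHom = Y

private lemma eq_of_le_of_card_le' {G : Type*} [Group G] [Finite G] {H K : Subgroup G}
    (h : H ≤ K) (hc : Nat.card K ≤ Nat.card H) : H = K := by
  refine SetLike.ext' (Set.eq_of_subset_of_ncard_le h ?_ (Set.toFinite _))
  rwa [← Nat.card_coe_set_eq, ← Nat.card_coe_set_eq]

/-- If `G ∈ A_π`, `p` is an odd prime dividing `|G|`, and a Sylow `p`-subgroup `P` of `G`
is non-cyclic and contains an element of order `p ^ 2`, then `P` contains exactly one
subgroup of order `p`. -/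
theorem stmt0 (G : Type*) [Group G] [Finite G] (hG : IsApi G)
    (p : ℕ) (hp : p.Prime) (hodd : Odd p) (hdvd : p ∣ Nat.card G)
    (P : Sylow p G) (hnc : ¬ IsCyclic (P : Subgroup G))
    (hx : ∃ x : G, x ∈ (P : Subgroup G) ∧ orderOf x = p ^ 2) :
    ∃! H : Subgroup G, H ≤ (P : Subgroup G) ∧ Nat.card H = p := by
  classical
  have hfact : Fact p.Prime := ⟨hp⟩
  obtain ⟨x, hxP, hxord⟩ := hx
  set Q : Subgroup G := (P : Subgroup G) with hQdef
  have hQp : IsPGroup p Q := P.2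
  have hx1 : x ≠ 1 := by
    intro h
    rw [h, orderOf_one] at hxord
    exact (Nat.one_lt_pow two_ne_zero hp.one_lt).ne' hxord.symm
  have hQnt : Nontrivial Q := ⟨⟨⟨x, hxP⟩, 1, by simp [hx1]⟩⟩
  -- a central element `z` of order `p` in `Q`
  have hcent : Nontrivial (Subgroup.center Q) := hQp.center_nontrivial
  have hcp : IsPGroup p (Subgroup.center Q) := hQp.to_subgroup _
  obtain ⟨m, hm⟩ := hcp.exists_card_eq
  have hpm : p ∣ Nat.card (Subgroup.center Q) := by
    rw [hm]
    refine dvd_pow_self p ?_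
    rintro rfl
    rw [pow_zero] at hm
    exact ((Finite.one_lt_card_iff_nontrivial).mpr hcent).ne' hm
  obtain ⟨ζ, hζ⟩ := exists_prime_orderOf_dvd_card' (G := Subgroup.center Q) p hpm
  set z : G := ((ζ : Q) : G) with hzdef
  have hzQ : z ∈ Q := (ζ : Q).2
  have hzord : orderOf z = p := by
    rw [← hζ, Subgroup.orderOf_coe, Subgroup.orderOf_coe]
  have hzc : ∀ g ∈ Q, z * g = g * z := by
    intro g hg
    have h := Subgroup.mem_center_iff.mp ζ.2 ⟨g, hg⟩
    exact (congrArg Subtype.val h).symm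
  refine ⟨zpowers z, ⟨zpowers_le.mpr hzQ, by rw [Nat.card_zpowers, hzord]⟩, ?_⟩
  rintro A ⟨hAQ, hAcard⟩
  by_cases hzA : z ∈ A
  · exact (eq_of_le_of_card_le' (zpowers_le.mpr hzA)
      (by rw [hAcard, Nat.card_zpowers, hzord])).symm
  exfalso
  -- a generator of A
  have hAnt : Nontrivial A := (Finite.one_lt_card_iff_nontrivial).mp (hAcard ▸ hp.one_lt)
  obtain ⟨a, haA, ha1⟩ := A.nontrivial_iff_exists_ne_one.mp hAnt
  have haQ : a ∈ Q := hAQ haA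
  have haord : orderOf a = p := by
    have h1 : Nat.card (zpowers a) ∣ Nat.card A := Subgroup.card_dvd_of_le (zpowers_le.mpr haA)
    rw [Nat.card_zpowers, hAcard] at h1
    exact (hp.eq_one_or_self_of_dvd _ h1).resolve_left
      (fun h => ha1 (orderOf_eq_one_iff.mp h))
  have hA_eq : A = zpowers a :=
    (eq_of_le_of_card_le' (zpowers_le.mpr haA)
      (by rw [hAcard, Nat.card_zpowers, haord])).symm
  set X : Subgroup G := A ⊔ zpowers z with hXdef
  have hXQ : X ≤ Q := sup_le hAQ (zpowers_le.mpr hzQ)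
  -- commutativity of X
  have hcommA : ∀ u ∈ A, ∀ v ∈ A, u * v = v * u := by
    rw [hA_eq]
    intro u hu v hv
    obtain ⟨i, rfl⟩ := Subgroup.mem_zpowers_iff.mp hu
    obtain ⟨j, rfl⟩ := Subgroup.mem_zpowers_iff.mp hv
    exact ((Commute.refl a).zpow_zpow i j).eq
  have hAX : ∀ u ∈ A, ∀ v ∈ X, u * v = v * u := by
    intro u hu
    have hle : X ≤ Subgroup.centralizer {u} := by
      refine sup_le ?_ (zpowers_le.mpr ?_)
      · intro b hb
        refine Subgroup.mem_centralizer_iff.mpr ?_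
        rintro s hs
        rw [Set.mem_singleton_iff] at hs
        rw [hs]
        exact hcommA u hu b hb
      · refine Subgroup.mem_centralizer_iff.mpr ?_
        rintro s hs
        rw [Set.mem_singleton_iff] at hs
        rw [hs]
        exact (hzc u (hAQ hu)).symm
    intro v hv
    exact Subgroup.mem_centralizer_iff.mp (hle hv) u rfl
  have hXcomm : ∀ u ∈ X, ∀ v ∈ X, u * v = v * u := by
    intro u hu v hv
    have hle : X ≤ Subgroup.centralizer {u} := by
      refine sup_le ?_ (zpowers_le.mpr ?_)
      · intro b hb
        refine Subgroup.mem_centralizer_iff.mpr ?_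
        rintro s hs
        rw [Set.mem_singleton_iff] at hs
        rw [hs]
        exact (hAX b hb u hu).symm
      · refine Subgroup.mem_centralizer_iff.mpr ?_
        rintro s hs
        rw [Set.mem_singleton_iff] at hs
        rw [hs]
        exact (hzc u (hXQ hu)).symm
    exact Subgroup.mem_centralizer_iff.mp (hle hv) u rfl
  -- every element of X has order dividing p
  have hexp : ∀ u ∈ X, u ^ p = 1 := by
    intro u hu
    have hu' : u ∈ closure ((A : Set G) ∪ (zpowers z : Set G)) := by
      rwa [← Subgroup.sup_eq_closure]
    refine Subgroup.closure_induction (p := fun g _ => g ^ p = 1) ?_ (one_pow p) ?_ ?_ hu'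
    · rintro g (hgA | hgz)
      · rw [hA_eq] at hgA
        obtain ⟨i, rfl⟩ := Subgroup.mem_zpowers_iff.mp hgA
        have ha : a ^ (p : ℤ) = 1 := by
          rw [zpow_natCast, ← haord, pow_orderOf_eq_one]
        rw [← zpow_natCast, ← zpow_mul, mul_comm, zpow_mul, ha, one_zpow]
      · obtain ⟨i, rfl⟩ := Subgroup.mem_zpowers_iff.mp hgz
        have hz : z ^ (p : ℤ) = 1 := by
          rw [zpow_natCast, ← hzord, pow_orderOf_eq_one]
        rw [← zpow_natCast, ← zpow_mul, mul_comm, zpow_mul, hz, one_zpow]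
    · intro g h hg hh ihg ihh
      have hc : Commute g h := by
        refine hXcomm g ?_ h ?_
        · rw [hXdef, Subgroup.sup_eq_closure]; exact hg
        · rw [hXdef, Subgroup.sup_eq_closure]; exact hh
      rw [hc.mul_pow, ihg, ihh, one_mul]
    · intro g hg ih
      rw [inv_pow, ih, inv_one]
  -- |X| = p ^ k with k ≥ 2
  have hXp : IsPGroup p X := hQp.to_le hXQ
  obtain ⟨k, hk⟩ := hXp.exists_card_eq
  have hzX : z ∈ X := (le_sup_right : zpowers z ≤ X) (mem_zpowers z)
  have hXne : Nat.card X ≠ p := by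
    intro h
    exact hzA ((eq_of_le_of_card_le' le_sup_left (by rw [h, hAcard])) ▸ hzX)
  have hdvdX : p ∣ Nat.card X := by
    have := Subgroup.card_dvd_of_le (le_sup_left : A ≤ X)
    rwa [hAcard] at this
  have hk2 : 2 ≤ k := by
    rcases Nat.lt_or_ge k 2 with hlt | hge
    · interval_cases k
      · rw [hk, pow_zero] at hdvdX
        exact absurd (Nat.eq_one_of_dvd_one hdvdX) hp.ne_one
      · rw [hk, pow_one] at hXne
        exact absurd rfl hXne
    · exact hge
  have hcardX : p ^ 2 ≤ Nat.card X := by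
    rw [hk]
    exact Nat.pow_le_pow_right hp.pos hk2
  -- a subgroup X' of X of order p^2
  obtain ⟨S, hScard⟩ := Sylow.exists_subgroup_card_pow_prime_of_le_card hp hXp hcardX
  set X' : Subgroup G := S.map X.subtype with hX'def
  have hX'X : X' ≤ X := Subgroup.map_subtype_le S
  have hX'card : Nat.card X' = p ^ 2 := by
    rw [← hScard]
    exact (Nat.card_congr (S.equivMapOfInjective X.subtype X.subtype_injective).toEquiv).symm
  have hX'p : IsPGroup p X' := hQp.to_le (hX'X.trans hXQ)
  have hX'comm : IsMulCommutative X' :=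
    ⟨⟨fun u v => Subtype.ext (hXcomm u.1 (hX'X u.2) v.1 (hX'X v.2))⟩⟩
  -- the cyclic subgroup of order p^2
  have hYp : IsPGroup p (zpowers x) := hQp.to_le (zpowers_le.mpr hxP)
  have hYcard : Nat.card (zpowers x) = p ^ 2 := by rw [Nat.card_zpowers, hxord]
  obtain ⟨g, hg⟩ := hG p hp X' (zpowers x) hX'p hYp hX'comm inferInstance
    (by rw [hX'card, hYcard])
  have hxmem : x ∈ X'.map (MulAut.conj g).toMonoidHom := hg ▸ mem_zpowers x
  obtain ⟨u, huX', hux⟩ := Subgroup.mem_map.mp hxmem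
  have hup : u ^ p = 1 := hexp u (hX'X huX')
  have hxp : x ^ p = 1 := by
    rw [← hux, ← map_pow, hup, map_one]
  have hdvd2 : p ^ 2 ∣ p := hxord ▸ orderOf_dvd_of_pow_eq_one hxp
  have hle := Nat.le_of_dvd hp.pos hdvd2
  nlinarith [hp.two_le]
end

section
/- Let G be a finite group and suppose N₁ and N₂ are normal subgroups of G with coprime orders. If both G/N₁ and G/N₂ have the property that any two abelian subgroups of equal prime-power order are conjugate, then G also has this property. -/
open Subgroup

open Pointwise in
lemma aux {G : Type*} [Group G] [Finite G] (N : Subgroup G) [N.Normal] {p : ℕ}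
    (hp : p.Prime) (hpN : ¬ p ∣ Nat.card N) (h : IsApi (G ⧸ N))
    (X Y : Subgroup G) (hX : IsPGroup p X) (hY : IsPGroup p Y)
    (hXc : IsMulCommutative X) (hYc : IsMulCommutative Y) (hcard : Nat.card X = Nat.card Y) :
    ∃ g : G, X.map (MulAut.conj g).toMonoidHom = Y := by
  haveI : Fact p.Prime := ⟨hp⟩
  haveI := hXc; haveI := hYc
  have hcopN : ∀ n : ℕ, Nat.Coprime (p ^ n) (Nat.card N) :=
    fun n => ((Nat.Prime.coprime_iff_not_dvd hp).mpr hpN).pow_left n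
  set f := QuotientGroup.mk' N with hf
  have key : ∀ Z : Subgroup G, IsPGroup p Z → Nat.card (Z.map f) = Nat.card Z := by
    intro Z hZ
    have hinj : Function.Injective (f.comp Z.subtype) := by
      rw [← MonoidHom.ker_eq_bot_iff, eq_bot_iff]
      intro z hz
      have hzN : (z : G) ∈ N := by
        rw [MonoidHom.mem_ker, MonoidHom.comp_apply] at hz
        rwa [← QuotientGroup.ker_mk' N, MonoidHom.mem_ker]
      obtain ⟨k, hk⟩ := hZ z
      have h1 : orderOf (z : G) ∣ p ^ k := by
        rw [Subgroup.orderOf_coe]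
        exact orderOf_dvd_of_pow_eq_one hk
      have h2 : orderOf (z : G) ∣ Nat.card N := N.orderOf_dvd_natCard hzN
      have h3 : orderOf (z : G) = 1 :=
        Nat.eq_one_of_dvd_one ((hcopN k).gcd_eq_one ▸ Nat.dvd_gcd h1 h2)
      have : (z : G) = 1 := orderOf_eq_one_iff.mp h3
      exact Subgroup.mem_bot.mpr (Subtype.ext this)
    have : Nat.card Z = Nat.card (f.comp Z.subtype).range :=
      Nat.card_congr (MonoidHom.ofInjective hinj).toEquiv
    rw [this, MonoidHom.range_comp, Subgroup.range_subtype]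
  obtain ⟨q, hq⟩ := h p hp (X.map f) (Y.map f) (hX.map f) (hY.map f)
    (X.map_isMulCommutative f) (Y.map_isMulCommutative f) (by rw [key X hX, key Y hY, hcard])
  obtain ⟨g, rfl⟩ := QuotientGroup.mk'_surjective N q
  set X' := X.map (MulAut.conj g).toMonoidHom with hX'
  have hcomm : (X.map f).map (MulAut.conj (f g)).toMonoidHom = X'.map f := by
    rw [hX', Subgroup.map_map, Subgroup.map_map]
    rfl
  have hmapeq : X'.map f = Y.map f := by rw [← hcomm, hq]
  have hX'p : IsPGroup p X' := hX.map _
  have cX' : Nat.card X' = Nat.card Y := by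
    rw [← hcard, hX']
    exact (Nat.card_congr (Subgroup.equivMapOfInjective X _ (MulAut.conj g).injective).toEquiv).symm
  set K := Y ⊔ N with hK
  have hX'K : X' ≤ K := by
    calc X' ≤ comap f (map f X') := le_comap_map _ _
    _ = comap f (map f Y) := by rw [hmapeq]
    _ = Y ⊔ N := by rw [Subgroup.comap_map_eq, QuotientGroup.ker_mk']
  have hYK : Y ≤ K := le_sup_left
  -- card K divides card Y * card N
  have hKdvd : Nat.card K ∣ Nat.card Y * Nat.card N := by
    have e1 : Nat.card K = Nat.card (K ⧸ N.subgroupOf K) * Nat.card (N.subgroupOf K) :=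
      Subgroup.card_eq_card_quotient_mul_card_subgroup _
    have e2 : Nat.card (N.subgroupOf K) = Nat.card N :=
      Nat.card_congr (Subgroup.subgroupOfEquivOfLe (le_sup_right : N ≤ K)).toEquiv
    have e3 : Nat.card (K ⧸ N.subgroupOf K) ∣ Nat.card Y := by
      have := Nat.card_congr (QuotientGroup.quotientInfEquivProdNormalQuotient Y N).toEquiv
      rw [← this]
      exact Subgroup.card_quotient_dvd_card _
    rw [e1, e2]
    exact Nat.mul_dvd_mul_right e3 _
  -- subgroupOf versions
  set QX := X'.subgroupOf K with hQX
  set QY := Y.subgroupOf K with hQY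
  have cQX : Nat.card QX = Nat.card Y := by
    rw [← cX']
    exact Nat.card_congr (Subgroup.subgroupOfEquivOfLe hX'K).toEquiv
  have cQY : Nat.card QY = Nat.card Y :=
    Nat.card_congr (Subgroup.subgroupOfEquivOfLe hYK).toEquiv
  have hQXp : IsPGroup p QX := hX'p.comap_subtype
  have hQYp : IsPGroup p QY := hY.comap_subtype
  -- any Sylow p-subgroup of K has card dividing card Y
  have sylcard : ∀ S : Sylow p K, Nat.card (S : Subgroup K) = Nat.card Y := by
    intro S
    obtain ⟨n, hn⟩ := (IsPGroup.iff_card).mp S.2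
    have hdvd : Nat.card (S : Subgroup K) ∣ Nat.card Y := by
      rw [hn]
      exact (hcopN n).dvd_of_dvd_mul_right (hn ▸ ((S : Subgroup K).card_subgroup_dvd_card.trans hKdvd))
    obtain ⟨SY, hSY⟩ := hQYp.exists_le_sylow
    have hcardSY : Nat.card Y ∣ Nat.card (SY : Subgroup K) := cQY ▸ Subgroup.card_dvd_of_le hSY
    obtain ⟨m, hm⟩ := (IsPGroup.iff_card).mp SY.2
    have hdvdY : Nat.card (SY : Subgroup K) ∣ Nat.card Y := by
      rw [hm]
      exact (hcopN m).dvd_of_dvd_mul_right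
        (hm ▸ ((SY : Subgroup K).card_subgroup_dvd_card.trans hKdvd))
    have e := Nat.dvd_antisymm hdvdY hcardSY
    rw [S.card_eq_multiplicity, ← SY.card_eq_multiplicity, e]
  -- QY and QX are Sylow
  obtain ⟨SY, hSY⟩ := hQYp.exists_le_sylow
  obtain ⟨SX, hSX⟩ := hQXp.exists_le_sylow
  have eY : QY = (SY : Subgroup K) :=
    Subgroup.eq_of_le_of_card_ge hSY (by rw [sylcard SY, cQY])
  have eX : QX = (SX : Subgroup K) :=
    Subgroup.eq_of_le_of_card_ge hSX (by rw [sylcard SX, cQX])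
  -- Sylow conjugacy
  obtain ⟨k, hk⟩ := MulAction.exists_smul_eq K SX SY
  have hk' : QX.map (MulAut.conj k).toMonoidHom = QY := by
    rw [eX, eY, ← hk]
    rfl
  refine ⟨(k : G) * g, ?_⟩
  have step : X.map (MulAut.conj ((k : G) * g)).toMonoidHom
      = X'.map (MulAut.conj (k : G)).toMonoidHom := by
    rw [hX', Subgroup.map_map]
    congr 1
    ext x
    simp [mul_assoc]
  rw [step]
  have hX'eq : X' = QX.map K.subtype := by
    rw [hQX, Subgroup.subgroupOf_map_subtype, inf_eq_left.mpr hX'K]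
  have hYeq : Y = QY.map K.subtype := by
    rw [hQY, Subgroup.subgroupOf_map_subtype, inf_eq_left.mpr hYK]
  rw [hX'eq, hYeq, ← hk', Subgroup.map_map, Subgroup.map_map]
  have hhom : (MulEquiv.toMonoidHom (MulAut.conj (k : G))).comp K.subtype
      = K.subtype.comp (MulEquiv.toMonoidHom (MulAut.conj k)) := by
    ext x; rfl
  rw [hhom]

/-- If `N₁, N₂ ⊴ G` have coprime orders and both `G ⧸ N₁` and `G ⧸ N₂` lie in `A_π`,
then so does `G`. -/
theorem stmt2 (G : Type*) [Group G] [Finite G]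
    (N₁ N₂ : Subgroup G) [N₁.Normal] [N₂.Normal]
    (hcop : Nat.Coprime (Nat.card N₁) (Nat.card N₂))
    (h₁ : IsApi (G ⧸ N₁)) (h₂ : IsApi (G ⧸ N₂)) :
    IsApi G := by
  intro p hp X Y hX hY hXc hYc hcard
  by_cases hd : p ∣ Nat.card N₁
  · have hpN₂ : ¬ p ∣ Nat.card N₂ := by
      intro hd2
      exact hp.ne_one (Nat.eq_one_of_dvd_one (hcop ▸ Nat.dvd_gcd hd hd2))
    exact aux N₂ hp hpN₂ h₂ X Y hX hY hXc hYc hcard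
  · exact aux N₁ hp hd h₁ X Y hX hY hXc hYc hcard
end

section
/- Let p be an odd prime and P a finite p-group with a unique subgroup of order p. Then P is cyclic. -/
open Subgroup

section Identities
variable {G : Type*} [Group G]

lemma central_pow_comm (c : G) (hc : ∀ g : G, c * g = g * c) (k : ℕ) (g : G) :
    c ^ k * g = g * c ^ k := by
  induction k with
  | zero => simp
  | succ k ih => rw [pow_succ, mul_assoc, hc g, ← mul_assoc, ih, mul_assoc]

lemma semicomm_pow (a b c : G) (h : b * a = a * b * c) (hc : ∀ g : G, c * g = g * c) :
    ∀ n : ℕ, b ^ n * a = a * b ^ n * c ^ n := by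
  intro n
  induction n with
  | zero => simp
  | succ n ih =>
    calc b ^ (n + 1) * a = b ^ n * (b * a) := by rw [pow_succ, mul_assoc]
      _ = b ^ n * (a * b * c) := by rw [h]
      _ = (b ^ n * a) * b * c := by simp [mul_assoc]
      _ = a * b ^ n * c ^ n * b * c := by rw [ih]
      _ = a * b ^ n * (c ^ n * b) * c := by simp [mul_assoc]
      _ = a * b ^ n * (b * c ^ n) * c := by rw [central_pow_comm c hc]
      _ = a * b ^ (n + 1) * c ^ (n + 1) := by rw [pow_succ, pow_succ]; simp [mul_assoc]

lemma mul_pow_semicomm (a b c : G) (h : b * a = a * b * c) (hc : ∀ g : G, c * g = g * c) :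
    ∀ n : ℕ, (a * b) ^ n = a ^ n * b ^ n * c ^ (n.choose 2) := by
  intro n
  induction n with
  | zero => simp
  | succ n ih =>
    calc (a * b) ^ (n + 1) = (a * b) ^ n * (a * b) := pow_succ _ n
      _ = a ^ n * b ^ n * c ^ (n.choose 2) * (a * b) := by rw [ih]
      _ = a ^ n * (b ^ n * a) * b * c ^ (n.choose 2) := by
          rw [mul_assoc (a ^ n * b ^ n), central_pow_comm c hc, ← mul_assoc, ← mul_assoc,
            mul_assoc (a ^ n)]
      _ = a ^ n * (a * b ^ n * c ^ n) * b * c ^ (n.choose 2) := by rw [semicomm_pow a b c h hc]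
      _ = a ^ (n + 1) * b ^ (n + 1) * c ^ ((n + 1).choose 2) := by
          rw [Nat.choose_succ_succ, Nat.choose_one_right, pow_add c n (n.choose 2),
            pow_succ a n, pow_succ b n]
          simp only [mul_assoc]
          rw [show c ^ n * (b * c ^ n.choose 2) = b * (c ^ n * c ^ n.choose 2) by
            rw [← mul_assoc, central_pow_comm c hc, mul_assoc]]

end Identities

universe u

theorem stmt12_aux (p : ℕ) (hp : p.Prime) (hodd : Odd p) :
    ∀ (n : ℕ) (P : Type u) [Group P] [Finite P], Nat.card P ≤ n → IsPGroup p P →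
      (∃! H : Subgroup P, Nat.card H = p) → IsCyclic P := by
  haveI : Fact p.Prime := ⟨hp⟩
  have hp2 : 2 < p := by
    rcases hp.eq_two_or_odd' with rfl | _
    · exact absurd hodd (by decide)
    · exact hp.two_le.lt_of_ne (by rintro rfl; exact absurd hodd (by decide))
  intro n
  induction n with
  | zero =>
    intro P _ _ hcard _ _
    exact absurd hcard (by simpa using Nat.card_pos.ne')
  | succ n IH =>
    intro P _ _ hcard hP huniq
    by_contra hnc
    obtain ⟨C, hC, hCuniq⟩ := huniq
    -- C is contained in every nontrivial subgroup
    have hmemC : ∀ H : Subgroup P, H ≠ ⊥ → C ≤ H := by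
      intro H hH
      obtain ⟨k, hk⟩ := (hP.to_subgroup H).exists_card_eq
      have hk0 : k ≠ 0 := by
        rintro rfl
        rw [pow_zero] at hk
        exact hH (Subgroup.card_eq_one.mp hk)
      obtain ⟨K, hK⟩ := Sylow.exists_subgroup_card_pow_prime p
        (n := 1) (by rw [hk]; exact pow_dvd_pow p (Nat.one_le_iff_ne_zero.mpr hk0))
      have hmap : Nat.card (K.map H.subtype) = p := by
        rw [← pow_one p, ← hK]
        exact (Nat.card_congr (K.equivMapOfInjective H.subtype H.subtype_injective).toEquiv).symm
      rw [← hCuniq _ hmap]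
      exact map_subtype_le K
    have hCbot : C ≠ ⊥ := by
      intro h
      rw [h, Subgroup.card_bot] at hC
      omega
    -- every proper subgroup is cyclic
    have hcyc : ∀ H : Subgroup P, H ≠ ⊤ → IsCyclic H := by
      intro H hH
      rcases eq_or_ne H ⊥ with rfl | hbot
      · haveI : Subsingleton (⊥ : Subgroup P) := by infer_instance
        infer_instance
      · have hlt : Nat.card H < Nat.card P := by
          have hle : Nat.card H ≤ Nat.card P :=
            Nat.le_of_dvd Nat.card_pos H.card_subgroup_dvd_card
          exact hle.lt_of_ne fun he => hH (H.eq_top_of_card_eq he)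
        have hCH := hmemC H hbot
        refine IH H (by omega) (hP.to_subgroup H) ⟨C.subgroupOf H, ?_, ?_⟩
        · rw [← hC]
          exact Nat.card_congr (Subgroup.subgroupOfEquivOfLe hCH).toEquiv
        · intro K hK
          have hmap : Nat.card (K.map H.subtype) = p := by
            rw [← hK]
            exact (Nat.card_congr (K.equivMapOfInjective H.subtype H.subtype_injective).toEquiv).symm
          apply Subgroup.map_injective H.subtype_injective
          rw [hCuniq _ hmap, Subgroup.subgroupOf_map_subtype, inf_eq_left.mpr hCH]
    -- two distinct maximal subgroups exist
    have hcoatom : ∀ x : P, ∃ M : Subgroup P, IsCoatom M ∧ x ∈ M := by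
      intro x
      rcases eq_top_or_exists_le_coatom (Subgroup.zpowers x) with h | ⟨M, hM, hle⟩
      · exact absurd ⟨⟨x, fun y => show y ∈ Subgroup.zpowers x by rw [h]; trivial⟩⟩ hnc
      · exact ⟨M, hM, hle (Subgroup.mem_zpowers x)⟩
    obtain ⟨M, N, hM, hN, hMN⟩ : ∃ M N : Subgroup P, IsCoatom M ∧ IsCoatom N ∧ M ≠ N := by
      by_contra hcon
      push_neg at hcon
      obtain ⟨M₀, hM₀, -⟩ := hcoatom 1
      refine hM₀.1 ((Subgroup.eq_top_iff' M₀).mpr fun x => ?_)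
      obtain ⟨M, hMc, hx⟩ := hcoatom x
      rwa [hcon M M₀ hMc hM₀] at hx
    -- every coatom is normal of index p
    haveI : Group.IsNilpotent P := hP.isNilpotent
    have hnorm : ∀ M : Subgroup P, IsCoatom M → M.Normal := fun M hM =>
      NormalizerCondition.normal_of_coatom M normalizerCondition_of_isNilpotent hM
    have hindex : ∀ M : Subgroup P, IsCoatom M → M.index = p := by
      intro M hM
      haveI := hnorm M hM
      obtain ⟨k, hk⟩ := hP.index M
      have hk0 : k ≠ 0 := by
        rintro rfl
        rw [pow_zero] at hk
        exact hM.1 (Subgroup.index_eq_one.mp hk)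
      rcases Nat.lt_or_ge k 2 with h2 | h2
      · interval_cases k
        · exact absurd rfl hk0
        · rw [hk, pow_one]
      · exfalso
        have hcardQ : Nat.card (P ⧸ M) = p ^ k := by rw [← M.index_eq_card, hk]
        obtain ⟨K, hK⟩ := Sylow.exists_subgroup_card_pow_prime p (n := 1)
          (by rw [hcardQ]; exact pow_dvd_pow p (by omega))
        rw [pow_one] at hK
        set H := K.comap (QuotientGroup.mk' M) with hHdef
        have hMH : M ≤ H := by
          intro x hx
          show QuotientGroup.mk' M x ∈ K
          rw [show QuotientGroup.mk' M x = 1 from (QuotientGroup.eq_one_iff x).mpr hx]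
          exact K.one_mem
        have hne1 : M ≠ H := by
          have hKbot : K ≠ ⊥ := by
            intro h
            rw [h, Subgroup.card_bot] at hK
            omega
          obtain ⟨q, hqK, hq1⟩ := SetLike.exists_of_lt hKbot.bot_lt
          obtain ⟨x, rfl⟩ := QuotientGroup.mk'_surjective M q
          intro h
          have hxH : x ∈ H := Subgroup.mem_comap.mpr hqK
          rw [← h] at hxH
          exact hq1 (Subgroup.mem_bot.mpr ((QuotientGroup.eq_one_iff x).mpr hxH))
        have hne2 : H ≠ ⊤ := by
          have hKtop : K ≠ ⊤ := by
            intro h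
            rw [h, Subgroup.card_top, hcardQ] at hK
            have h2' : p ^ 1 < p ^ k := Nat.pow_lt_pow_right hp.one_lt (by omega)
            rw [pow_one] at h2'
            omega
          obtain ⟨q, -, hqK⟩ := SetLike.exists_of_lt hKtop.lt_top
          obtain ⟨x, rfl⟩ := QuotientGroup.mk'_surjective M q
          intro h
          exact hqK (Subgroup.mem_comap.mp (show x ∈ H from h ▸ Subgroup.mem_top x))
        exact hne2 (hM.2 H (hMH.lt_of_ne hne1))
    -- consequences: p-th powers and commutators lie in every coatom
    have hqfacts : ∀ M : Subgroup P, IsCoatom M →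
        (∀ x : P, x ^ p ∈ M) ∧ (∀ g h : P, (g * h)⁻¹ * (h * g) ∈ M) := by
      intro M hM
      haveI := hnorm M hM
      have hcards : Nat.card (P ⧸ M) = p := by rw [← M.index_eq_card, hindex M hM]
      haveI : IsCyclic (P ⧸ M) := isCyclic_of_prime_card hcards
      have hQcomm : ∀ a b : P ⧸ M, a * b = b * a := by
        obtain ⟨g, hg⟩ := IsCyclic.exists_generator (α := P ⧸ M)
        intro a b
        obtain ⟨i, rfl⟩ := hg a
        obtain ⟨j, rfl⟩ := hg b
        rw [← zpow_add, ← zpow_add, add_comm]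
      constructor
      · intro x
        rw [← QuotientGroup.eq_one_iff (x ^ p)]
        show (QuotientGroup.mk' M) (x ^ p) = 1
        rw [map_pow, ← hcards]
        exact pow_card_eq_one'
      · intro g h
        rw [← QuotientGroup.eq_one_iff]
        show (QuotientGroup.mk' M) ((g * h)⁻¹ * (h * g)) = 1
        rw [map_mul, map_inv, map_mul, map_mul,
          hQcomm ((QuotientGroup.mk' M) g) ((QuotientGroup.mk' M) h), inv_mul_cancel]
    -- D = M ⊓ N is central of index at least p^2
    set D := M ⊓ N with hDdef
    have hNM : ¬N ≤ M := by
      intro hle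
      rcases eq_or_ne N M with h | h
      · exact hMN h.symm
      · exact hM.1 (hN.2 M (hle.lt_of_ne h))
    have hDM : D < M := by
      refine inf_le_left.lt_of_ne fun h => ?_
      have : M ≤ N := by rw [← h]; exact inf_le_right
      rcases eq_or_ne M N with h' | h'
      · exact hMN h'
      · exact hN.1 (hM.2 N (this.lt_of_ne h'))
    have hsup : M ⊔ N = ⊤ := hM.2 (M ⊔ N) (left_lt_sup.mpr hNM)
    -- D is central
    have hcentral : ∀ d ∈ D, ∀ g : P, d * g = g * d := by
      have hside : ∀ (L : Subgroup P), IsCoatom L → D ≤ L →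
          L ≤ Subgroup.centralizer (D : Set P) := by
        intro L hL hDL
        letI := (hcyc L hL.1).commGroup
        intro m hm
        rw [Subgroup.mem_centralizer_iff]
        intro d hd
        have : (⟨d, hDL hd⟩ : L) * ⟨m, hm⟩ = ⟨m, hm⟩ * ⟨d, hDL hd⟩ := mul_comm _ _
        exact congrArg Subtype.val this
      have htot : (⊤ : Subgroup P) ≤ Subgroup.centralizer (D : Set P) := by
        rw [← hsup]
        exact sup_le (hside M hM inf_le_left) (hside N hN inf_le_right)
      intro d hd g
      exact Subgroup.mem_centralizer_iff.mp (htot (Subgroup.mem_top g)) d hd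
    -- cardinalities
    have hMcard : Nat.card M * p = Nat.card P := by
      rw [← hindex M hM]; exact M.card_mul_index
    have hDdvd : p * Nat.card D ∣ Nat.card M := by
      obtain ⟨a, ha⟩ := (hP.to_subgroup D).exists_card_eq
      obtain ⟨b, hb⟩ := (hP.to_subgroup M).exists_card_eq
      have hdvd : Nat.card D ∣ Nat.card M := card_dvd_of_le hDM.le
      have hne : Nat.card D ≠ Nat.card M := by
        intro h
        have hDsub : Nat.card (D.subgroupOf M) = Nat.card M := by
          rw [← h]
          exact Nat.card_congr (Subgroup.subgroupOfEquivOfLe hDM.le).toEquiv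
        have htop : D.subgroupOf M = ⊤ := Subgroup.eq_top_of_card_eq _ hDsub
        obtain ⟨x, hxM, hxD⟩ := SetLike.exists_of_lt hDM
        have : (⟨x, hxM⟩ : M) ∈ D.subgroupOf M := htop ▸ Subgroup.mem_top _
        exact hxD (Subgroup.mem_subgroupOf.mp this)
      have hab : a < b := by
        rw [ha, hb] at hdvd hne
        have hle := (Nat.pow_dvd_pow_iff_le_right hp.one_lt).mp hdvd
        exact hle.lt_of_ne fun h => hne (by rw [h])
      rw [ha, hb, ← pow_succ']
      exact pow_dvd_pow p hab
    have hD2 : p * p * Nat.card D ∣ Nat.card P := by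
      rw [← hMcard, show p * p * Nat.card D = p * Nat.card D * p by ring]
      exact mul_dvd_mul_right hDdvd p
    -- the p-th power map is a homomorphism
    have hpowD : ∀ x : P, x ^ p ∈ D :=
      fun x => Subgroup.mem_inf.mpr ⟨(hqfacts M hM).1 x, (hqfacts N hN).1 x⟩
    have hcomD : ∀ g h : P, (g * h)⁻¹ * (h * g) ∈ D :=
      fun g h => Subgroup.mem_inf.mpr ⟨(hqfacts M hM).2 g h, (hqfacts N hN).2 g h⟩
    obtain ⟨t, ht⟩ : p ∣ Nat.choose p 2 := hp.dvd_choose_self (by omega) hp2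
    have hmul : ∀ a b : P, (a * b) ^ p = a ^ p * b ^ p := by
      intro a b
      set c := (a * b)⁻¹ * (b * a) with hcdef
      have hc : b * a = a * b * c := by rw [hcdef]; group
      have hccen : ∀ g : P, c * g = g * c := fun g => hcentral c (hcomD a b) g
      have hcp : c ^ p = 1 := by
        have h1 := semicomm_pow a b c hc hccen p
        rw [hcentral (b ^ p) (hpowD b) a] at h1
        exact left_eq_mul.mp h1
      rw [mul_pow_semicomm a b c hc hccen p, ht, pow_mul, hcp, one_pow, mul_one]
    set φ : P →* P := { toFun := fun x => x ^ p, map_one' := one_pow p, map_mul' := hmul }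
      with hφdef
    have hrange : φ.range ≤ D := by rintro x ⟨y, rfl⟩; exact hpowD y
    have hkercard : p * p ∣ Nat.card φ.ker := by
      have e1 : Nat.card φ.ker * Nat.card φ.range = Nat.card P := by
        rw [show Nat.card φ.range = φ.ker.index from
          ((Subgroup.index_eq_card φ.ker).trans
            (Nat.card_congr (QuotientGroup.quotientKerEquivRange φ).toEquiv)).symm]
        exact φ.ker.card_mul_index
      have e2 : Nat.card φ.range ∣ Nat.card D := card_dvd_of_le hrange
      have e3 : p * p * Nat.card φ.range ∣ Nat.card φ.ker * Nat.card φ.range := by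
        rw [e1]
        exact dvd_trans (mul_dvd_mul_left (p * p) e2) hD2
      exact (Nat.mul_dvd_mul_iff_right Nat.card_pos).mp e3
    -- conclusion: two distinct subgroups of order p
    have hker_ne_bot : φ.ker ≠ ⊥ := by
      intro h
      rw [h, Subgroup.card_bot] at hkercard
      have h1 := Nat.le_of_dvd one_pos hkercard
      have h2 : p ≤ p * p := Nat.le_mul_of_pos_left p (by omega)
      omega
    obtain ⟨x, hxK, hx1'⟩ := SetLike.exists_of_lt hker_ne_bot.bot_lt
    have hx1 : x ≠ 1 := by simpa [Subgroup.mem_bot] using hx1'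
    have hxp : x ^ p = 1 := MonoidHom.mem_ker.mp hxK
    have horder : orderOf x = p := by
      rcases hp.eq_one_or_self_of_dvd _ (orderOf_dvd_of_pow_eq_one hxp) with h | h
      · exact absurd (orderOf_eq_one_iff.mp h) hx1
      · exact h
    have hZx : Subgroup.zpowers x = C := hCuniq _ (by
      show Nat.card (Subgroup.zpowers x) = p
      rw [Nat.card_zpowers, horder])
    have hnotle : ¬φ.ker ≤ Subgroup.zpowers x := by
      intro hle
      have h1 := Nat.le_of_dvd Nat.card_pos (card_dvd_of_le hle)
      rw [Nat.card_zpowers, horder] at h1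
      have h2 := Nat.le_of_dvd Nat.card_pos hkercard
      have h3 : p < p * p := lt_of_lt_of_le (by omega : p < 2 * p)
        (Nat.mul_le_mul_right p (by omega))
      omega
    obtain ⟨y, hyK, hyZ⟩ := SetLike.not_le_iff_exists.mp hnotle
    have hy1 : y ≠ 1 := fun h => hyZ (h ▸ (Subgroup.zpowers x).one_mem)
    have hyp : y ^ p = 1 := MonoidHom.mem_ker.mp hyK
    have horder_y : orderOf y = p := by
      rcases hp.eq_one_or_self_of_dvd _ (orderOf_dvd_of_pow_eq_one hyp) with h | h
      · exact absurd (orderOf_eq_one_iff.mp h) hy1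
      · exact h
    have hZy : Subgroup.zpowers y = C := hCuniq _ (by
      show Nat.card (Subgroup.zpowers y) = p
      rw [Nat.card_zpowers, horder_y])
    exact hyZ (by rw [hZx, ← hZy]; exact Subgroup.mem_zpowers y)


/-- A finite `p`-group, `p` an odd prime, with a unique subgroup of order `p` is cyclic. -/
theorem stmt12 (p : ℕ) (hp : p.Prime) (hodd : Odd p)
    (P : Type*) [Group P] [Finite P] (hP : IsPGroup p P)
    (huniq : ∃! H : Subgroup P, Nat.card H = p) :
    IsCyclic P :=
  stmt12_aux p hp hodd (Nat.card P) P le_rfl hP huniq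
end
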